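/- For a partition lambda with m_i parts of size i, define d_i = 1*m_1 + 2*m_2 + ... + (i-1)*m_{i-1} + i*(m_i + m_{i+1} + ...). Then prod_i prod_{k=1}^{m_i} (q^{d_i} - q^{d_i - k}) = q^{2[sum_{h<i} h m_h m_i + (1/2) sum_i (i-1) m_i^2]} * prod_i |GL(m_i, q)|. -/

import Mathlib

open Finset

/-- `d i = 1*m_1 + 2*m_2 + ... + (i-1)*m_{i-1} + i*(m_i + m_{i+1} + ...)` for a partition
with multiplicities `m`. -/
def dPart (m : ℕ →₀ ℕ) (i : ℕ) : ℕ :=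
  (∑ h ∈ Finset.range i, h * m h) + i * ∑ k ∈ m.support.filter (fun k => i ≤ k), m k

lemma one_le_of_mem (m : ℕ →₀ ℕ) (hm0 : m 0 = 0) {i : ℕ} (hi : i ∈ m.support) : 1 ≤ i := by
  rcases Nat.eq_zero_or_pos i with h | h
  · exfalso; rw [Finsupp.mem_support_iff] at hi; exact hi (h ▸ hm0)
  · exact h

lemma le_dPart (m : ℕ →₀ ℕ) (hm0 : m 0 = 0) {i : ℕ} (hi : i ∈ m.support) :
    m i ≤ dPart m i := by
  have hi1 : 1 ≤ i := one_le_of_mem m hm0 hi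
  have hmem : i ∈ m.support.filter (fun k => i ≤ k) := by
    simp [Finset.mem_filter, hi]
  have h1 : m i ≤ ∑ k ∈ m.support.filter (fun k => i ≤ k), m k :=
    Finset.single_le_sum (fun k _ => Nat.zero_le _) hmem
  have h2 : (∑ k ∈ m.support.filter (fun k => i ≤ k), m k)
      ≤ i * ∑ k ∈ m.support.filter (fun k => i ≤ k), m k :=
    Nat.le_mul_of_pos_left _ hi1
  exact le_trans (le_trans h1 h2) (Nat.le_add_left _ _)

lemma prodIcc (q : ℚ) (d n : ℕ) (hnd : n ≤ d) :
    ∏ k ∈ Finset.Icc 1 n, (q ^ d - q ^ (d - k)) =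
      q ^ (n * (d - n)) * ∏ j ∈ Finset.range n, (q ^ n - q ^ j) := by
  have key : ∀ k ∈ Finset.Icc 1 n,
      q ^ d - q ^ (d - k) = q ^ (d - n) * (q ^ n - q ^ (n - k)) := by
    intro k hk
    rw [Finset.mem_Icc] at hk
    rw [mul_sub, ← pow_add, ← pow_add]
    congr 2 <;> omega
  rw [Finset.prod_congr rfl key, Finset.prod_mul_distrib, Finset.prod_const,
    Nat.card_Icc, ← pow_mul]
  have hcard : (n + 1 - 1) = n := by omega
  rw [hcard]
  congr 1
  · ring_nf
  · refine Finset.prod_nbij' (fun k => n - k) (fun j => n - j) ?_ ?_ ?_ ?_ ?_ <;>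
      intro a ha <;>
      simp only [Finset.mem_Icc, Finset.mem_range] at ha ⊢ <;>
      omega

lemma expo (m : ℕ →₀ ℕ) (hm0 : m 0 = 0) :
    ∑ i ∈ m.support, m i * (dPart m i - m i) =
      2 * (∑ i ∈ m.support, m i * ∑ h ∈ Finset.range i, h * m h)
        + ∑ i ∈ m.support, (i - 1) * m i ^ 2 := by
  set S := m.support with hS
  set T := ∑ i ∈ S, m i * ∑ h ∈ Finset.range i, h * m h with hT
  have h1 : ∑ i ∈ S, m i * (dPart m i - m i) + ∑ i ∈ S, m i ^ 2
      = ∑ i ∈ S, m i * dPart m i := by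
    rw [← Finset.sum_add_distrib]
    refine Finset.sum_congr rfl fun i hi => ?_
    have hmd := le_dPart m hm0 hi
    rw [pow_two, ← Nat.mul_add, Nat.sub_add_cancel hmd]
  have hA : ∀ k ∈ S, ∑ h ∈ Finset.range k, h * m h
      = ∑ i ∈ S.filter (fun i => i < k), i * m i := by
    intro k _
    rw [eq_comm]
    apply Finset.sum_subset
    · intro x hx; rw [Finset.mem_filter] at hx; rw [Finset.mem_range]; exact hx.2
    · intro x hx hxn
      rw [Finset.mem_range] at hx
      rw [Finset.mem_filter, not_and] at hxn
      have : x ∉ S := fun h => hxn h hx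
      rw [Finsupp.notMem_support_iff] at this
      rw [this, mul_zero]
  have hsplit : ∀ k ∈ S, S.filter (fun i => i ≤ k) = insert k (S.filter (fun i => i < k)) := by
    intro k hk
    ext x
    simp only [Finset.mem_filter, Finset.mem_insert]
    constructor
    · rintro ⟨hx, hle⟩
      rcases Nat.lt_or_ge x k with h | h
      · exact Or.inr ⟨hx, h⟩
      · exact Or.inl (by omega)
    · rintro (rfl | ⟨hx, hlt⟩)
      · exact ⟨hk, le_refl _⟩
      · exact ⟨hx, le_of_lt hlt⟩
  have hswap : ∑ i ∈ S, ∑ k ∈ S.filter (fun k => i ≤ k), i * m i * m k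
      = ∑ k ∈ S, ∑ i ∈ S.filter (fun i => i ≤ k), i * m i * m k := by
    simp only [Finset.sum_filter]
    exact Finset.sum_comm
  have hD : ∑ i ∈ S, i * m i * (∑ k ∈ S.filter (fun k => i ≤ k), m k)
      = T + ∑ k ∈ S, k * m k ^ 2 := by
    have e1 : ∀ i ∈ S, i * m i * (∑ k ∈ S.filter (fun k => i ≤ k), m k)
        = ∑ k ∈ S.filter (fun k => i ≤ k), i * m i * m k := by
      intro i _; rw [Finset.mul_sum]
    rw [Finset.sum_congr rfl e1, hswap]
    have e2 : ∀ k ∈ S, ∑ i ∈ S.filter (fun i => i ≤ k), i * m i * m k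
        = m k * (∑ h ∈ Finset.range k, h * m h) + k * m k ^ 2 := by
      intro k hk
      rw [hsplit k hk, Finset.sum_insert (by simp [Finset.mem_filter])]
      rw [hA k hk, ← Finset.sum_mul]
      ring
    rw [Finset.sum_congr rfl e2, Finset.sum_add_distrib]
  have h2 : ∑ i ∈ S, m i * dPart m i = 2 * T + ∑ i ∈ S, i * m i ^ 2 := by
    have e1 : ∀ i ∈ S, m i * dPart m i
        = m i * (∑ h ∈ Finset.range i, h * m h)
          + i * m i * (∑ k ∈ S.filter (fun k => i ≤ k), m k) := by
      intro i _; rw [dPart]; ring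
    rw [Finset.sum_congr rfl e1, Finset.sum_add_distrib, hD, ← hT]
    ring
  have h3 : ∑ i ∈ S, i * m i ^ 2 = ∑ i ∈ S, (i - 1) * m i ^ 2 + ∑ i ∈ S, m i ^ 2 := by
    rw [← Finset.sum_add_distrib]
    refine Finset.sum_congr rfl fun i hi => ?_
    have hi1 := one_le_of_mem m hm0 hi
    obtain ⟨j, rfl⟩ : ∃ j, i = j + 1 := ⟨i - 1, by omega⟩
    simp [Nat.add_sub_cancel]; ring
  omega

/-- `∏_i ∏_{k=1}^{m_i} (q^{d_i} - q^{d_i - k})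
      = q^{2[∑_{h<i} h m_h m_i + (1/2)∑_i (i-1) m_i²]} ∏_i |GL(m_i, q)|`. -/
theorem stmt3 (q : ℚ) (m : ℕ →₀ ℕ) (hm0 : m 0 = 0) :
    (∏ i ∈ m.support, ∏ k ∈ Finset.Icc 1 (m i),
        (q ^ (dPart m i) - q ^ (dPart m i - k))) =
      q ^ (2 * (∑ i ∈ m.support, (m i) * ∑ h ∈ Finset.range i, h * m h)
            + ∑ i ∈ m.support, (i - 1) * (m i) ^ 2) *
        ∏ i ∈ m.support, ∏ j ∈ Finset.range (m i), (q ^ (m i) - q ^ j) := by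
  have key : ∀ i ∈ m.support, ∏ k ∈ Finset.Icc 1 (m i),
      (q ^ (dPart m i) - q ^ (dPart m i - k))
      = q ^ (m i * (dPart m i - m i)) * ∏ j ∈ Finset.range (m i), (q ^ (m i) - q ^ j) :=
    fun i hi => prodIcc q _ _ (le_dPart m hm0 hi)
  rw [Finset.prod_congr rfl key, Finset.prod_mul_distrib,
    Finset.prod_pow_eq_pow_sum, expo m hm0]
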